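/- Let A₁ and A₂ be real n×n symmetric matrices, and let λᵢ(M) denote the i-th smallest eigenvalue of a symmetric matrix M. Then for each 1 ≤ i ≤ n and each 1 ≤ j ≤ i, one has λᵢ(A₁+A₂) ≥ λ_{i−j+1}(A₁) + λⱼ(A₂). -/

import Mathlib

open RealInnerProductSpace Finset Submodule

variable {n : ℕ}

lemma quad_eq {A : Matrix (Fin n) (Fin n) ℝ} (hA : A.IsHermitian)
    (x : EuclideanSpace ℝ (Fin n)) :
    ⟪Matrix.toEuclideanLin A x, x⟫ =
      ∑ k, hA.eigenvalues k * ⟪hA.eigenvectorBasis k, x⟫ ^ 2 := by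
  set b := hA.eigenvectorBasis with hb
  have hfb : ∀ k, Matrix.toEuclideanLin A (b k) = hA.eigenvalues k • b k := by
    intro k
    exact WithLp.ofLp_injective 2 (hA.mulVec_eigenvectorBasis k)
  conv_lhs => rw [← b.sum_repr x]
  rw [map_sum, sum_inner]
  refine Finset.sum_congr rfl fun k _ => ?_
  rw [map_smul, hfb, real_inner_smul_left, real_inner_smul_left,
    OrthonormalBasis.repr_apply_apply, b.sum_repr]
  ring

lemma norm_sq_eq {n : ℕ} (b : OrthonormalBasis (Fin n) ℝ (EuclideanSpace ℝ (Fin n)))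
    (x : EuclideanSpace ℝ (Fin n)) :
    ⟪x, x⟫ = ∑ k, ⟪b k, x⟫ ^ 2 := by
  conv_lhs => rw [← b.sum_repr x]
  rw [sum_inner]
  refine Finset.sum_congr rfl fun k _ => ?_
  rw [real_inner_smul_left, OrthonormalBasis.repr_apply_apply, b.sum_repr, sq]

lemma inner_eq_zero_of_mem_span (b : OrthonormalBasis (Fin n) ℝ (EuclideanSpace ℝ (Fin n)))
    {S : Set (Fin n)} {k : Fin n} (hk : k ∉ S) {x : EuclideanSpace ℝ (Fin n)}
    (hx : x ∈ span ℝ (b '' S)) : ⟪b k, x⟫ = 0 := by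
  induction hx using Submodule.span_induction with
  | mem y hy =>
    obtain ⟨m, hm, rfl⟩ := hy
    exact b.orthonormal.2 (fun h => hk (h ▸ hm))
  | zero => exact inner_zero_right _
  | add y z _ _ hy hz => rw [inner_add_right, hy, hz, add_zero]
  | smul c y _ hy => rw [real_inner_smul_right, hy, mul_zero]

lemma quad_ge {A : Matrix (Fin n) (Fin n) ℝ} (hA : A.IsHermitian)
    {S : Set (Fin n)} {c : ℝ} (hc : ∀ k ∈ S, c ≤ hA.eigenvalues k)
    {x : EuclideanSpace ℝ (Fin n)}
    (hx : x ∈ span ℝ (hA.eigenvectorBasis '' S)) :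
    c * ⟪x, x⟫ ≤ ⟪Matrix.toEuclideanLin A x, x⟫ := by
  rw [quad_eq hA, norm_sq_eq hA.eigenvectorBasis x, Finset.mul_sum]
  refine Finset.sum_le_sum fun k _ => ?_
  by_cases hk : k ∈ S
  · exact mul_le_mul_of_nonneg_right (hc k hk) (sq_nonneg _)
  · rw [inner_eq_zero_of_mem_span _ hk hx]; simp

lemma quad_le {A : Matrix (Fin n) (Fin n) ℝ} (hA : A.IsHermitian)
    {S : Set (Fin n)} {c : ℝ} (hc : ∀ k ∈ S, hA.eigenvalues k ≤ c)
    {x : EuclideanSpace ℝ (Fin n)}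
    (hx : x ∈ span ℝ (hA.eigenvectorBasis '' S)) :
    ⟪Matrix.toEuclideanLin A x, x⟫ ≤ c * ⟪x, x⟫ := by
  rw [quad_eq hA, norm_sq_eq hA.eigenvectorBasis x, Finset.mul_sum]
  refine Finset.sum_le_sum fun k _ => ?_
  by_cases hk : k ∈ S
  · exact mul_le_mul_of_nonneg_right (hc k hk) (sq_nonneg _)
  · rw [inner_eq_zero_of_mem_span _ hk hx]; simp

lemma finrank_span_b (b : OrthonormalBasis (Fin n) ℝ (EuclideanSpace ℝ (Fin n)))
    (S : Finset (Fin n)) :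
    Module.finrank ℝ (span ℝ (b '' ↑S)) = S.card := by
  classical
  have hinj : Function.Injective b := b.orthonormal.linearIndependent.injective
  have hli : LinearIndependent ℝ
      (fun x : ((S.image b : Finset (EuclideanSpace ℝ (Fin n))) : Set (EuclideanSpace ℝ (Fin n)))
        => (x : EuclideanSpace ℝ (Fin n))) := by
    refine (b.orthonormal.linearIndependent.linearIndepOn_id).mono ?_
    intro y hy
    simp only [Finset.coe_image, Set.mem_image, Finset.mem_coe] at hy
    obtain ⟨m, _, rfl⟩ := hy
    exact ⟨m, rfl⟩
  rw [← Finset.coe_image, finrank_span_finset_eq_card hli,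
    Finset.card_image_of_injective _ hinj]

lemma card_filter_lt (t : ℕ) (ht : t ≤ n) :
    (Finset.univ.filter fun k : Fin n => (k : ℕ) < t).card = t := by
  rw [show (Finset.univ.filter fun k : Fin n => (k : ℕ) < t)
      = Finset.image (Fin.castLE ht) Finset.univ from ?_]
  · rw [Finset.card_image_of_injective _ (Fin.castLE_injective ht), Finset.card_univ,
      Fintype.card_fin]
  · ext k
    simp only [Finset.mem_filter, Finset.mem_univ, true_and, Finset.mem_image]
    constructor
    · intro h; exact ⟨⟨k, h⟩, Fin.val_injective rfl⟩
    · rintro ⟨m, rfl⟩; exact m.isLt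

lemma card_filter_ge (t : ℕ) (ht : t ≤ n) :
    (Finset.univ.filter fun k : Fin n => ¬((k : ℕ) < t)).card = n - t := by
  have h2 := Finset.card_filter_add_card_filter_not
    (s := (Finset.univ : Finset (Fin n))) (p := fun k : Fin n => (k : ℕ) < t)
  rw [card_filter_lt t ht, Finset.card_univ, Fintype.card_fin] at h2
  omega



/-- The eigenvalues of a Hermitian matrix, sorted in ascending order. -/
noncomputable def sortedEig {n : ℕ} {A : Matrix (Fin n) (Fin n) ℝ}
    (hA : A.IsHermitian) : Fin n → ℝ :=
  hA.eigenvalues ∘ Tuple.sort hA.eigenvalues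

/-- Weyl's inequality (lower bound form): for real symmetric matrices `A₁`, `A₂`,
`λᵢ(A₁+A₂) ≥ λ_{i−j+1}(A₁) + λⱼ(A₂)` for `1 ≤ i ≤ n`, `1 ≤ j ≤ i`
(1-based indexing, eigenvalues in ascending order). -/
theorem weyl_lower {n : ℕ} (A₁ A₂ : Matrix (Fin n) (Fin n) ℝ)
    (h₁ : A₁.IsHermitian) (h₂ : A₂.IsHermitian)
    (i j : ℕ) (hi1 : 1 ≤ i) (hin : i ≤ n) (hj1 : 1 ≤ j) (hji : j ≤ i) :
    sortedEig h₁ ⟨i - j + 1 - 1, by omega⟩ + sortedEig h₂ ⟨j - 1, by omega⟩ ≤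
      sortedEig (h₁.add h₂) ⟨i - 1, by omega⟩ := by
  classical
  set h₀ := h₁.add h₂ with hh₀
  set σ₀ := Tuple.sort h₀.eigenvalues with hσ₀
  set σ₁ := Tuple.sort h₁.eigenvalues with hσ₁
  set σ₂ := Tuple.sort h₂.eigenvalues with hσ₂
  set F₀ : Finset (Fin n) := Finset.univ.filter (fun k : Fin n => (k : ℕ) < i) with hF₀
  set F₁ : Finset (Fin n) := Finset.univ.filter (fun k : Fin n => ¬((k : ℕ) < i - j)) with hF₁
  set F₂ : Finset (Fin n) := Finset.univ.filter (fun k : Fin n => ¬((k : ℕ) < j - 1)) with hF₂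
  set U := span ℝ (h₀.eigenvectorBasis '' ↑(F₀.image σ₀)) with hU
  set V := span ℝ (h₁.eigenvectorBasis '' ↑(F₁.image σ₁)) with hV
  set W := span ℝ (h₂.eigenvectorBasis '' ↑(F₂.image σ₂)) with hW
  -- dimensions
  have finU : Module.finrank ℝ U = i := by
    rw [hU, finrank_span_b, Finset.card_image_of_injective _ σ₀.injective, hF₀,
      card_filter_lt i hin]
  have finV : Module.finrank ℝ V = n - (i - j) := by
    rw [hV, finrank_span_b, Finset.card_image_of_injective _ σ₁.injective, hF₁,
      card_filter_ge (i - j) (by omega)]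
  have finW : Module.finrank ℝ W = n - (j - 1) := by
    rw [hW, finrank_span_b, Finset.card_image_of_injective _ σ₂.injective, hF₂,
      card_filter_ge (j - 1) (by omega)]
  have hdimtop : Module.finrank ℝ (EuclideanSpace ℝ (Fin n)) = n := by
    simp [finrank_euclideanSpace]
  have hUV : n - (i - j) + i ≤ n + Module.finrank ℝ ↥(U ⊓ V) := by
    have h3 := Submodule.finrank_sup_add_finrank_inf_eq U V
    have h4 := Submodule.finrank_le (U ⊔ V)
    rw [hdimtop] at h4
    omega
  have hUVW : 1 ≤ Module.finrank ℝ ↥(U ⊓ V ⊓ W) := by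
    have h3 := Submodule.finrank_sup_add_finrank_inf_eq (U ⊓ V) W
    have h4 := Submodule.finrank_le (U ⊓ V ⊔ W)
    rw [hdimtop] at h4
    omega
  have hne : U ⊓ V ⊓ W ≠ ⊥ := by
    intro h
    rw [h, finrank_bot] at hUVW
    omega
  obtain ⟨x, hx, hx0⟩ := Submodule.exists_mem_ne_zero_of_ne_bot hne
  -- quadratic form bounds
  have e0 : ⟪Matrix.toEuclideanLin (A₁ + A₂) x, x⟫ ≤
      sortedEig h₀ ⟨i - 1, by omega⟩ * ⟪x, x⟫ := by
    refine quad_le h₀ ?_ hx.1.1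
    intro k hk
    simp only [Finset.coe_image, Set.mem_image, Finset.mem_coe, hF₀, Finset.mem_filter,
      Finset.mem_univ, true_and] at hk
    obtain ⟨m, hm, rfl⟩ := hk
    exact Tuple.monotone_sort h₀.eigenvalues (show m ≤ ⟨i - 1, by omega⟩ by
      rw [Fin.le_def]; simp; omega)
  have e1 : sortedEig h₁ ⟨i - j + 1 - 1, by omega⟩ * ⟪x, x⟫ ≤
      ⟪Matrix.toEuclideanLin A₁ x, x⟫ := by
    refine quad_ge h₁ ?_ hx.1.2
    intro k hk
    simp only [Finset.coe_image, Set.mem_image, Finset.mem_coe, hF₁, Finset.mem_filter,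
      Finset.mem_univ, true_and] at hk
    obtain ⟨m, hm, rfl⟩ := hk
    exact Tuple.monotone_sort h₁.eigenvalues (show (⟨i - j + 1 - 1, by omega⟩ : Fin n) ≤ m by
      rw [Fin.le_def]; simp; omega)
  have e2 : sortedEig h₂ ⟨j - 1, by omega⟩ * ⟪x, x⟫ ≤
      ⟪Matrix.toEuclideanLin A₂ x, x⟫ := by
    refine quad_ge h₂ ?_ hx.2
    intro k hk
    simp only [Finset.coe_image, Set.mem_image, Finset.mem_coe, hF₂, Finset.mem_filter,
      Finset.mem_univ, true_and] at hk
    obtain ⟨m, hm, rfl⟩ := hk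
    exact Tuple.monotone_sort h₂.eigenvalues (show (⟨j - 1, by omega⟩ : Fin n) ≤ m by
      rw [Fin.le_def]; simp; omega)
  have hadd : Matrix.toEuclideanLin (A₁ + A₂) x
      = Matrix.toEuclideanLin A₁ x + Matrix.toEuclideanLin A₂ x := by
    rw [map_add]; rfl
  have hxx : (0 : ℝ) < ⟪x, x⟫ := by
    rw [real_inner_self_eq_norm_sq]
    have : ‖x‖ ≠ 0 := norm_ne_zero_iff.2 hx0
    positivity
  rw [hadd, inner_add_left] at e0
  have key : (sortedEig h₁ ⟨i - j + 1 - 1, by omega⟩ + sortedEig h₂ ⟨j - 1, by omega⟩) * ⟪x, x⟫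
      ≤ sortedEig h₀ ⟨i - 1, by omega⟩ * ⟪x, x⟫ := by
    rw [add_mul]; linarith
  exact (mul_le_mul_iff_of_pos_right hxx).mp key
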